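/- For every complex number α and every natural number n ≥ 1: Σ_{k=0}^n (−1)^k C(n,k) H_k(α) = ( (1 − α)^n − 1 ) / n. -/
import Mathlib

open Finset

/-- The generalized harmonic number `H_n(α) = ∑_{k=1}^n α^k / k`. -/
noncomputable def genHarmonic (α : ℂ) (n : ℕ) : ℂ :=
  ∑ k ∈ Finset.Icc 1 n, α ^ k / (k : ℂ)

lemma prefix_sum (m j : ℕ) :
    ∑ k ∈ Finset.range (j + 1), (-1 : ℂ) ^ k * ((m+1).choose k : ℂ) =
      (-1) ^ j * (m.choose j : ℂ) := by
  induction j with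
  | zero => simp
  | succ j ih =>
    rw [Finset.sum_range_succ, ih, Nat.choose_succ_succ m j]
    push_cast
    ring

lemma full_sum (m : ℕ) :
    ∑ k ∈ Finset.range (m + 2), (-1 : ℂ) ^ k * ((m+1).choose k : ℂ) = 0 := by
  have h := Int.alternating_sum_range_choose (n := m+1)
  simp only [Nat.succ_ne_zero, if_neg, Nat.add_eq_zero, and_false] at h
  have h2 := congrArg (Int.cast : ℤ → ℂ) h
  push_cast at h2
  convert h2 using 2

lemma tail_sum (m i : ℕ) (hi : i + 1 ≤ m + 1) :
    ∑ k ∈ Finset.Icc (i+1) (m+1), (-1 : ℂ) ^ k * ((m+1).choose k : ℂ) =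
      (-1) ^ (i+1) * (m.choose i : ℂ) := by
  have : Finset.Icc (i+1) (m+1) = Finset.Ico (i+1) (m+2) := by
    ext x; simp [Nat.lt_succ_iff]
  rw [this, Finset.sum_Ico_eq_sub _ (by omega), full_sum, prefix_sum]
  ring

theorem stmt_9 (α : ℂ) (n : ℕ) (hn : 1 ≤ n) :
    ∑ k ∈ Finset.range (n + 1), (-1) ^ k * (Nat.choose n k : ℂ) * genHarmonic α k =
      ((1 - α) ^ n - 1) / (n : ℂ) := by
  obtain ⟨m, rfl⟩ : ∃ m, n = m + 1 := ⟨n - 1, (Nat.succ_pred_eq_of_pos hn).symm⟩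
  simp only [genHarmonic, Finset.mul_sum]
  rw [Finset.sum_comm' (t' := Finset.Icc 1 (m+1)) (s' := fun j => Finset.Icc j (m+1))
    (by intro k j; simp only [Finset.mem_range, Finset.mem_Icc]; omega)]
  have key : ∀ j ∈ Finset.Icc 1 (m+1),
      ∑ k ∈ Finset.Icc j (m+1), (-1 : ℂ) ^ k * ((m+1).choose k : ℂ) * (α ^ j / (j : ℂ)) =
        ((m+1).choose j : ℂ) * (-α) ^ j / ((m : ℂ) + 1) := by
    intro j hj
    simp only [Finset.mem_Icc] at hj
    obtain ⟨i, rfl⟩ : ∃ i, j = i + 1 := ⟨j - 1, by omega⟩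
    rw [← Finset.sum_mul, tail_sum m i (by omega)]
    have hc : ((m : ℂ) + 1) * (m.choose i : ℂ) = ((m+1).choose (i+1) : ℂ) * ((i : ℂ) + 1) := by
      have := Nat.add_one_mul_choose_eq m i
      exact_mod_cast congrArg (Nat.cast : ℕ → ℂ) this
    have hi1 : ((i : ℂ) + 1) ≠ 0 := Nat.cast_add_one_ne_zero i
    have hm1 : ((m : ℂ) + 1) ≠ 0 := Nat.cast_add_one_ne_zero m
    rw [neg_pow]
    push_cast
    field_simp
    linear_combination α ^ (i+1) * (-1)^(i+1) * hc
  rw [Finset.sum_congr rfl key, ← Finset.sum_div]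
  congr 1
  · have hpow : (1 - α) ^ (m+1) = ∑ k ∈ Finset.range (m+2), (-α) ^ k * ((m+1).choose k : ℂ) := by
      have := add_pow (-α) 1 (m+1)
      simp only [one_pow, mul_one] at this
      rw [show (1 : ℂ) - α = -α + 1 by ring, this]
    have : Finset.Icc 1 (m+1) = Finset.Ico 1 (m+2) := by ext x; simp [Nat.lt_succ_iff]
    rw [this, Finset.sum_Ico_eq_sub _ (by omega : 1 ≤ m + 2), hpow]
    simp [mul_comm]
  · push_cast; ring
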